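/- Let 0 < ε < 1 and let X be a random variable taking value 1/ε with probability 1-ε and value 0 with probability ε, and let Y be an independent random variable taking value 1/ε - 1 with probability 1-ε and value 2/ε - 1 with probability ε. Then E[max(Y - X, 0)] = 2(1-ε)² + ε(2-ε), and in particular E[max(Y - X, 0)] ≥ 2 - 4ε. -/

import Mathlib

open MeasureTheory ProbabilityTheory

theorem lower_bound_even_step {Ω : Type*} [MeasureSpace Ω]
    [IsProbabilityMeasure (ℙ : Measure Ω)]
    (ε : ℝ) (hε0 : 0 < ε) (hε1 : ε < 1) (X Y : Ω → ℝ)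
    (hmX : Measurable X) (hmY : Measurable Y)
    (hX1 : ℙ {ω | X ω = 1 / ε} = ENNReal.ofReal (1 - ε))
    (hX0 : ℙ {ω | X ω = 0} = ENNReal.ofReal ε)
    (hY1 : ℙ {ω | Y ω = 1 / ε - 1} = ENNReal.ofReal (1 - ε))
    (hY2 : ℙ {ω | Y ω = 2 / ε - 1} = ENNReal.ofReal ε)
    (hindep : IndepFun X Y) :
    (∫ ω, max (Y ω - X ω) 0) = 2 * (1 - ε) ^ 2 + ε * (2 - ε) ∧
      2 - 4 * ε ≤ ∫ ω, max (Y ω - X ω) 0 := by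
  have hεne : ε ≠ 0 := ne_of_gt hε0
  have hinv : (0:ℝ) < 1 / ε := by positivity
  set c1 : ℝ := 1 / ε - 1 with hc1
  set c2 : ℝ := 2 / ε - 1 with hc2
  have hc1nn : 0 ≤ c1 := by
    rw [hc1, sub_nonneg, le_div_iff₀ hε0, one_mul]; exact le_of_lt hε1
  have hc2nn : 0 ≤ c2 := by
    rw [hc2, sub_nonneg, le_div_iff₀ hε0, one_mul]; linarith
  set A : Set Ω := X ⁻¹' {1 / ε} with hA
  set A0 : Set Ω := X ⁻¹' {0} with hA0
  set B : Set Ω := Y ⁻¹' {1 / ε - 1} with hB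
  set B2 : Set Ω := Y ⁻¹' {2 / ε - 1} with hB2
  have hmA : MeasurableSet A := hmX (measurableSet_singleton _)
  have hmA0 : MeasurableSet A0 := hmX (measurableSet_singleton _)
  have hmB : MeasurableSet B := hmY (measurableSet_singleton _)
  have hmB2 : MeasurableSet B2 := hmY (measurableSet_singleton _)
  have hAeq : ℙ A = ENNReal.ofReal (1 - ε) := hX1
  have hA0eq : ℙ A0 = ENNReal.ofReal ε := hX0
  have hBeq : ℙ B = ENNReal.ofReal (1 - ε) := hY1
  have hB2eq : ℙ B2 = ENNReal.ofReal ε := hY2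
  have hdisjX : Disjoint A A0 := by
    rw [Set.disjoint_left]
    intro ω h1 h2
    simp only [hA, hA0, Set.mem_preimage, Set.mem_singleton_iff] at h1 h2
    rw [h1] at h2; exact absurd h2 (ne_of_gt hinv)
  have hdisjY : Disjoint B B2 := by
    rw [Set.disjoint_left]
    intro ω h1 h2
    simp only [hB, hB2, Set.mem_preimage, Set.mem_singleton_iff] at h1 h2
    rw [h1] at h2
    have h4 : (1:ℝ) / ε = 2 / ε := by linarith
    have h6 : (1:ℝ)/ε * ε = 2/ε * ε := by rw [h4]
    rw [div_mul_cancel₀ _ hεne, div_mul_cancel₀ _ hεne] at h6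
    norm_num at h6
  -- complement of A ∪ A0 is null
  have hXfull : ℙ (A ∪ A0) = 1 := by
    rw [measure_union hdisjX hmA0, hAeq, hA0eq,
      ← ENNReal.ofReal_add (by linarith) (le_of_lt hε0)]
    norm_num
  have hYfull : ℙ (B ∪ B2) = 1 := by
    rw [measure_union hdisjY hmB2, hBeq, hB2eq,
      ← ENNReal.ofReal_add (by linarith) (le_of_lt hε0)]
    norm_num
  have hXnull : ℙ (A ∪ A0)ᶜ = 0 := by
    rw [measure_compl (hmA.union hmA0) (measure_ne_top _ _), hXfull, measure_univ,
      tsub_self]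
  have hYnull : ℙ (B ∪ B2)ᶜ = 0 := by
    rw [measure_compl (hmB.union hmB2) (measure_ne_top _ _), hYfull, measure_univ,
      tsub_self]
  -- the simple function
  set g : Ω → ℝ := fun ω =>
    (A ∩ B2).indicator (fun _ => c1) ω + (A0 ∩ B).indicator (fun _ => c1) ω
      + (A0 ∩ B2).indicator (fun _ => c2) ω with hg
  have hae : (fun ω => max (Y ω - X ω) 0) =ᵐ[ℙ] g := by
    have haeX : ∀ᵐ ω ∂(ℙ : Measure Ω), ω ∈ A ∪ A0 := by
      rw [ae_iff]; exact hXnull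
    have haeY : ∀ᵐ ω ∂(ℙ : Measure Ω), ω ∈ B ∪ B2 := by
      rw [ae_iff]; exact hYnull
    filter_upwards [haeX, haeY] with ω hωX hωY
    · skip
      have hAmem : ω ∈ A → ω ∉ A0 := fun h h' => Set.disjoint_left.mp hdisjX h h'
      have hBmem : ω ∈ B → ω ∉ B2 := fun h h' => Set.disjoint_left.mp hdisjY h h'
      rcases hωX with hX' | hX' <;> rcases hωY with hY' | hY'
      · -- X = 1/ε, Y = 1/ε - 1 : max = 0
        have hx : X ω = 1 / ε := hX'
        have hy : Y ω = 1 / ε - 1 := hY'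
        have hnA0 : ω ∉ A0 := hAmem hX'
        have hnB2 : ω ∉ B2 := hBmem hY'
        have m1 : ω ∉ A ∩ B2 := fun h => hnB2 h.2
        have m2 : ω ∉ A0 ∩ B := fun h => hnA0 h.1
        have m3 : ω ∉ A0 ∩ B2 := fun h => hnA0 h.1
        simp only [hg, Set.indicator_of_notMem m1, Set.indicator_of_notMem m2,
          Set.indicator_of_notMem m3]
        rw [hx, hy]
        have hle : 1 / ε - 1 - 1 / ε ≤ 0 := by linarith
        rw [max_eq_right hle]
        norm_num
      · -- X = 1/ε, Y = 2/ε - 1 : max = c1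
        have hx : X ω = 1 / ε := hX'
        have hy : Y ω = 2 / ε - 1 := hY'
        have hnA0 : ω ∉ A0 := hAmem hX'
        have m2 : ω ∉ A0 ∩ B := fun h => hnA0 h.1
        have m3 : ω ∉ A0 ∩ B2 := fun h => hnA0 h.1
        simp only [hg, Set.indicator_of_mem (Set.mem_inter hX' hY'),
          Set.indicator_of_notMem m2, Set.indicator_of_notMem m3]
        rw [hx, hy]
        have : 2 / ε - 1 - 1 / ε = c1 := by rw [hc1]; field_simp; ring
        rw [this, max_eq_left hc1nn]; ring
      · -- X = 0, Y = 1/ε - 1 : max = c1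
        have hx : X ω = 0 := hX'
        have hy : Y ω = 1 / ε - 1 := hY'
        have hnA : ω ∉ A := fun h => Set.disjoint_left.mp hdisjX h hX'
        have hnB2 : ω ∉ B2 := hBmem hY'
        have m1 : ω ∉ A ∩ B2 := fun h => hnA h.1
        have m3 : ω ∉ A0 ∩ B2 := fun h => hnB2 h.2
        simp only [hg, Set.indicator_of_mem (Set.mem_inter hX' hY'),
          Set.indicator_of_notMem m1, Set.indicator_of_notMem m3]
        rw [hx, hy, sub_zero, max_eq_left hc1nn]; ring
      · -- X = 0, Y = 2/ε - 1 : max = c2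
        have hx : X ω = 0 := hX'
        have hy : Y ω = 2 / ε - 1 := hY'
        have hnA : ω ∉ A := fun h => Set.disjoint_left.mp hdisjX h hX'
        have hnB : ω ∉ B := fun h => Set.disjoint_left.mp hdisjY h hY'
        have m1 : ω ∉ A ∩ B2 := fun h => hnA h.1
        have m2 : ω ∉ A0 ∩ B := fun h => hnB h.2
        simp only [hg, Set.indicator_of_mem (Set.mem_inter hX' hY'),
          Set.indicator_of_notMem m1, Set.indicator_of_notMem m2]
        rw [hx, hy, sub_zero, max_eq_left hc2nn]; ring
  -- measures of intersections via independence
  have hAB2 : ℙ (A ∩ B2) = ENNReal.ofReal ((1 - ε) * ε) := by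
    rw [hA, hB2, hindep.measure_inter_preimage_eq_mul _ _
      (measurableSet_singleton _) (measurableSet_singleton _)]
    rw [← hA, ← hB2, hAeq, hB2eq, ← ENNReal.ofReal_mul (by linarith)]
  have hA0B : ℙ (A0 ∩ B) = ENNReal.ofReal (ε * (1 - ε)) := by
    rw [hA0, hB, hindep.measure_inter_preimage_eq_mul _ _
      (measurableSet_singleton _) (measurableSet_singleton _)]
    rw [← hA0, ← hB, hA0eq, hBeq, ← ENNReal.ofReal_mul (le_of_lt hε0)]
  have hA0B2 : ℙ (A0 ∩ B2) = ENNReal.ofReal (ε * ε) := by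
    rw [hA0, hB2, hindep.measure_inter_preimage_eq_mul _ _
      (measurableSet_singleton _) (measurableSet_singleton _)]
    rw [← hA0, ← hB2, hA0eq, hB2eq, ← ENNReal.ofReal_mul (le_of_lt hε0)]
  -- integrability of indicators
  have hi1 : Integrable ((A ∩ B2).indicator (fun _ => c1)) ℙ :=
    (integrable_const c1).indicator (hmA.inter hmB2)
  have hi2 : Integrable ((A0 ∩ B).indicator (fun _ => c1)) ℙ :=
    (integrable_const c1).indicator (hmA0.inter hmB)
  have hi3 : Integrable ((A0 ∩ B2).indicator (fun _ => c2)) ℙ :=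
    (integrable_const c2).indicator (hmA0.inter hmB2)
  have hint : (∫ ω, max (Y ω - X ω) 0) = 2 * (1 - ε) ^ 2 + ε * (2 - ε) := by
    rw [integral_congr_ae hae]
    show (∫ ω, (((A ∩ B2).indicator (fun _ => c1) ω
        + (A0 ∩ B).indicator (fun _ => c1) ω)
        + (A0 ∩ B2).indicator (fun _ => c2) ω)) = _
    have hi12 : Integrable (fun ω => (A ∩ B2).indicator (fun _ => c1) ω
        + (A0 ∩ B).indicator (fun _ => c1) ω) ℙ := hi1.add hi2
    rw [integral_add hi12 hi3, integral_add hi1 hi2,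
      integral_indicator_const _ (hmA.inter hmB2),
      integral_indicator_const _ (hmA0.inter hmB),
      integral_indicator_const _ (hmA0.inter hmB2),
      measureReal_def, measureReal_def, measureReal_def,
      hAB2, hA0B, hA0B2,
      ENNReal.toReal_ofReal (by nlinarith), ENNReal.toReal_ofReal (by nlinarith),
      ENNReal.toReal_ofReal (by nlinarith)]
    rw [hc1, hc2]
    field_simp
    ring_nf
    field_simp
  refine ⟨hint, ?_⟩
  rw [hint]; nlinarith
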